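/- arXiv:1209.4850 — 7 statements merged into one kernel-verified Lean document; each statement's English description precedes it below -/
import Mathlib

section
/- For every integer n ≥ 0 and every θ ∈ ℝ, the n-th order moment of the Radon transform satisfies m_n(θ) = (1/2^n) Σ_{l=0}^n C(n,l) μ_{l, n−l} e^{i(n−2l)θ}, where C(n,l) is the binomial coefficient. In particular, the entries of row n+1 of the Pascal triangle of the image are, up to the factor 1/2^n, the Fourier coefficients of m_n(θ). -/
lemma pascal_aux (w : ℂ) (θ : ℝ) :
    (((w.re * Real.cos θ + w.im * Real.sin θ : ℝ)) : ℂ)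
      = (w * Complex.exp (-(Complex.I * θ)) + (starRingEnd ℂ) w * Complex.exp (Complex.I * θ)) / 2 := by
  have h1 : Complex.exp (Complex.I * θ) = Complex.cos θ + Complex.sin θ * Complex.I := by
    rw [mul_comm, Complex.exp_mul_I]
  have h2 : Complex.exp (-(Complex.I * θ)) = Complex.cos θ - Complex.sin θ * Complex.I := by
    rw [show -(Complex.I * (θ:ℂ)) = (-(θ:ℂ)) * Complex.I by ring, Complex.exp_mul_I,
      Complex.cos_neg, Complex.sin_neg]
    ring
  obtain ⟨a, b⟩ := w
  rw [h1, h2, Complex.mk_eq_add_mul_I, map_add, map_mul, Complex.conj_I, Complex.conj_ofReal,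
    Complex.conj_ofReal]
  simp only [Complex.add_re, Complex.add_im, Complex.ofReal_re, Complex.ofReal_im,
    Complex.mul_re, Complex.mul_im, Complex.I_re, Complex.I_im]
  push_cast
  ring_nf
  rw [Complex.I_sq]
  ring

/-- the `n`-th order moment of the Radon transform satisfies
`m_n(θ) = 2⁻ⁿ ∑_{l=0}^n C(n,l) μ_{l,n-l} e^{i(n-2l)θ}`. -/
theorem pascal_stmt4 (N : ℕ) (z : Fin N → ℂ) (ρ : Fin N → ℝ) (n : ℕ) (θ : ℝ) :
    ((∑ k, ((z k).re * Real.cos θ + (z k).im * Real.sin θ) ^ n * ρ k : ℝ) : ℂ)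
      = (1 / 2 ^ n) * ∑ l ∈ Finset.range (n + 1),
          (n.choose l : ℂ)
            * (∑ k, z k ^ l * (starRingEnd ℂ) (z k) ^ (n - l) * (ρ k : ℂ))
            * Complex.exp (Complex.I * ((n : ℂ) - 2 * (l : ℂ)) * (θ : ℂ)) := by
  have key : ∀ k : Fin N,
      ((((z k).re * Real.cos θ + (z k).im * Real.sin θ) ^ n * ρ k : ℝ) : ℂ)
        = (1 / 2 ^ n) * ∑ l ∈ Finset.range (n + 1),
            (n.choose l : ℂ) * (z k ^ l * (starRingEnd ℂ) (z k) ^ (n - l) * (ρ k : ℂ))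
              * Complex.exp (Complex.I * ((n : ℂ) - 2 * (l : ℂ)) * (θ : ℂ)) := by
    intro k
    rw [Complex.ofReal_mul, Complex.ofReal_pow, pascal_aux (z k) θ, div_pow, add_pow]
    rw [Finset.sum_div, Finset.sum_mul, Finset.mul_sum]
    refine Finset.sum_congr rfl fun l hl => ?_
    have hln : l ≤ n := Nat.lt_succ_iff.mp (Finset.mem_range.mp hl)
    have hexp : Complex.exp (Complex.I * ((n : ℂ) - 2 * (l : ℂ)) * (θ : ℂ))
        = Complex.exp (-(Complex.I * θ)) ^ l * Complex.exp (Complex.I * θ) ^ (n - l) := by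
      rw [← Complex.exp_nat_mul, ← Complex.exp_nat_mul, ← Complex.exp_add]
      congr 1
      have : ((n - l : ℕ) : ℂ) = (n : ℂ) - (l : ℂ) := by
        push_cast [Nat.cast_sub hln]; ring
      rw [this]; ring
    rw [hexp, mul_pow, mul_pow]
    ring
  rw [Complex.ofReal_sum]
  simp_rw [key]
  rw [← Finset.mul_sum]
  congr 1
  rw [Finset.sum_comm]
  refine Finset.sum_congr rfl fun l _ => ?_
  rw [Finset.mul_sum, Finset.sum_mul]
end

section
/- Fix an integer n ≥ 0 and angles θ_1, …, θ_{n+1} ∈ ℝ such that the complex numbers e^{2iθ_1}, …, e^{2iθ_{n+1}} are pairwise distinct. If two discrete images have equal Radon-transform moments of order n at these angles, i.e. m_n^{(1)}(θ_a) = m_n^{(2)}(θ_a) for a = 1, …, n+1, then their moments of total order n agree: μ_{l, n−l}^{(1)} = μ_{l, n−l}^{(2)} for all l = 0, 1, …, n. (Equivalently: the last row of the Pascal triangle T^n(I) can be reconstructed from n+1 generic samples of m_n.) -/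
open Finset Polynomial

private theorem pascal_key (z : ℂ) (t : ℝ) :
    z + (starRingEnd ℂ) z * Complex.exp (2*Complex.I*t)
      = 2 * Complex.exp ((t:ℂ) * Complex.I) * ((z.re * Real.cos t + z.im * Real.sin t : ℝ) : ℂ) := by
  have e2 : Complex.exp (2*Complex.I*t) = Complex.exp ((t:ℂ)*Complex.I) ^ 2 := by
    rw [sq, ← Complex.exp_add]; ring_nf
  rw [e2, Complex.exp_mul_I, ← Complex.ofReal_cos, ← Complex.ofReal_sin]
  have hc : Real.cos t ^ 2 + Real.sin t ^ 2 = 1 := Real.cos_sq_add_sin_sq t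
  set c := Real.cos t with hc'
  set s := Real.sin t with hs'
  clear_value c s
  rw [Complex.ext_iff]
  constructor <;> simp [pow_two]
  · linear_combination (-z.re) * hc
  · linear_combination (-z.im) * hc

private theorem pascal_sum_key (n N : ℕ) (z : Fin N → ℂ) (ρ : Fin N → ℝ) (t : ℝ) :
    (2 * Complex.exp ((t:ℂ)*Complex.I))^n
        * ((∑ k, ((z k).re * Real.cos t + (z k).im * Real.sin t)^n * ρ k : ℝ) : ℂ)
      = ∑ l ∈ Finset.range (n+1),
          (n.choose l : ℂ) * (∑ k, z k^l * (starRingEnd ℂ) (z k)^(n-l) * (ρ k : ℂ))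
            * Complex.exp (2*Complex.I*t)^(n-l) := by
  rw [Complex.ofReal_sum, Finset.mul_sum]
  have step1 : ∀ k : Fin N,
      (2 * Complex.exp ((t:ℂ)*Complex.I))^n
          * ((((z k).re * Real.cos t + (z k).im * Real.sin t)^n * ρ k : ℝ) : ℂ)
        = (z k + (starRingEnd ℂ) (z k) * Complex.exp (2*Complex.I*t))^n * (ρ k : ℂ) := by
    intro k
    rw [Complex.ofReal_mul, Complex.ofReal_pow, pascal_key (z k) t, mul_pow, mul_pow]
    ring
  rw [Finset.sum_congr rfl fun k _ => step1 k]
  have step2 : ∀ k : Fin N,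
      (z k + (starRingEnd ℂ) (z k) * Complex.exp (2*Complex.I*t))^n * (ρ k : ℂ)
        = ∑ l ∈ Finset.range (n+1),
            z k^l * ((starRingEnd ℂ) (z k) * Complex.exp (2*Complex.I*t))^(n-l)
              * (n.choose l : ℂ) * (ρ k : ℂ) := by
    intro k
    rw [add_pow, Finset.sum_mul]
  rw [Finset.sum_congr rfl fun k _ => step2 k, Finset.sum_comm]
  refine Finset.sum_congr rfl fun l _ => ?_
  rw [Finset.mul_sum, Finset.sum_mul]
  refine Finset.sum_congr rfl fun k _ => ?_
  rw [mul_pow]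
  ring

/-- `n+1` generic samples of the `n`-th Radon-transform moment determine all
the moments `μ_{l,n-l}` of total order `n` (the last row of the Pascal triangle `T^n(I)`). -/
theorem pascal_stmt5 (n : ℕ) (θ : Fin (n + 1) → ℝ)
    (hθ : Function.Injective fun a => Complex.exp (2 * Complex.I * (θ a : ℂ)))
    (N₁ N₂ : ℕ) (z₁ : Fin N₁ → ℂ) (ρ₁ : Fin N₁ → ℝ) (z₂ : Fin N₂ → ℂ) (ρ₂ : Fin N₂ → ℝ)
    (h : ∀ a, ∑ k, ((z₁ k).re * Real.cos (θ a) + (z₁ k).im * Real.sin (θ a)) ^ n * ρ₁ k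
            = ∑ k, ((z₂ k).re * Real.cos (θ a) + (z₂ k).im * Real.sin (θ a)) ^ n * ρ₂ k) :
    ∀ l ≤ n,
      ∑ k, z₁ k ^ l * (starRingEnd ℂ) (z₁ k) ^ (n - l) * (ρ₁ k : ℂ)
        = ∑ k, z₂ k ^ l * (starRingEnd ℂ) (z₂ k) ^ (n - l) * (ρ₂ k : ℂ) := by
  let M₁ : ℕ → ℂ := fun l => ∑ k, z₁ k ^ l * (starRingEnd ℂ) (z₁ k) ^ (n - l) * (ρ₁ k : ℂ)
  let M₂ : ℕ → ℂ := fun l => ∑ k, z₂ k ^ l * (starRingEnd ℂ) (z₂ k) ^ (n - l) * (ρ₂ k : ℂ)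
  set p : ℂ[X] := ∑ j ∈ Finset.range (n+1),
      Polynomial.C ((n.choose j : ℂ) * (M₁ j - M₂ j)) * Polynomial.X ^ (n - j) with hp
  have heval : ∀ a : Fin (n+1), p.eval (Complex.exp (2 * Complex.I * (θ a : ℂ))) = 0 := by
    intro a
    have e1 := pascal_sum_key n N₁ z₁ ρ₁ (θ a)
    have e2 := pascal_sum_key n N₂ z₂ ρ₂ (θ a)
    have hev : p.eval (Complex.exp (2 * Complex.I * (θ a : ℂ)))
        = ∑ j ∈ Finset.range (n+1),
            (n.choose j : ℂ) * (M₁ j - M₂ j) * Complex.exp (2*Complex.I*(θ a : ℂ))^(n-j) := by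
      simp [hp, Polynomial.eval_finset_sum]
    rw [hev]
    have hsplit : ∑ j ∈ Finset.range (n+1),
        (n.choose j : ℂ) * (M₁ j - M₂ j) * Complex.exp (2*Complex.I*(θ a : ℂ))^(n-j)
        = (∑ j ∈ Finset.range (n+1),
            (n.choose j : ℂ) * M₁ j * Complex.exp (2*Complex.I*(θ a : ℂ))^(n-j))
          - ∑ j ∈ Finset.range (n+1),
            (n.choose j : ℂ) * M₂ j * Complex.exp (2*Complex.I*(θ a : ℂ))^(n-j) := by
      rw [← Finset.sum_sub_distrib]
      exact Finset.sum_congr rfl fun j _ => by ring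
    rw [hsplit, ← e1, ← e2, h a, sub_self]
  have hdeg : p.natDegree < Fintype.card (Fin (n+1)) := by
    rw [Fintype.card_fin]
    refine lt_of_le_of_lt (Polynomial.natDegree_sum_le _ _) ?_
    rw [Finset.fold_max_lt]
    refine ⟨Nat.succ_pos n, fun j hj => ?_⟩
    calc (Polynomial.C ((n.choose j : ℂ) * (M₁ j - M₂ j)) * Polynomial.X ^ (n - j)).natDegree
        ≤ (Polynomial.C ((n.choose j : ℂ) * (M₁ j - M₂ j))).natDegree
            + (Polynomial.X ^ (n - j) : ℂ[X]).natDegree := Polynomial.natDegree_mul_le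
      _ ≤ 0 + (n - j) := by
          gcongr
          · exact le_of_eq (Polynomial.natDegree_C _)
          · exact le_of_eq (Polynomial.natDegree_X_pow _)
      _ < n + 1 := by omega
  have hp0 : p = 0 :=
    Polynomial.eq_zero_of_natDegree_lt_card_of_eval_eq_zero p hθ heval hdeg
  intro l hl
  have hcoeff : p.coeff (n - l) = (n.choose l : ℂ) * (M₁ l - M₂ l) := by
    rw [hp, Polynomial.finset_sum_coeff]
    rw [Finset.sum_eq_single l]
    · rw [Polynomial.coeff_C_mul, Polynomial.coeff_X_pow, if_pos rfl, mul_one]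
    · intro j hj hjl
      rw [Polynomial.coeff_C_mul, Polynomial.coeff_X_pow, if_neg, mul_zero]
      rw [Finset.mem_range] at hj
      omega
    · intro hlmem
      exact absurd (Finset.mem_range.mpr (by omega)) hlmem
  rw [hp0, Polynomial.coeff_zero] at hcoeff
  have hch : (n.choose l : ℂ) ≠ 0 := Nat.cast_ne_zero.mpr (Nat.choose_pos hl).ne'
  have hz := (mul_eq_zero.mp hcoeff.symm).resolve_left hch
  exact sub_eq_zero.mp hz
end

section
/- Let z_1, …, z_N ∈ ℂ be pairwise distinct pixel locations and let θ_1, …, θ_N ∈ ℝ be angles such that e^{2iθ_1}, …, e^{2iθ_N} are pairwise distinct. If two intensity assignments ρ, ρ' : {1,…,N} → ℝ on these pixel locations satisfy m_n^{(ρ)}(θ_a) = m_n^{(ρ')}(θ_a) for every n = 0, 1, …, N−1 and every a = 1, …, n+1, then ρ_k = ρ'_k for all k. (Equivalently: given the pixel locations, the image can be reconstructed from the moments of its Radon transform at N generic fixed angles.) -/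
open Complex in
theorem pascal_key_id (t : ℝ) (z : ℂ) :
    (((z.re * Real.cos t + z.im * Real.sin t : ℝ)) : ℂ) * (2 * Complex.exp ((t:ℂ) * I)) =
      z + (starRingEnd ℂ) z * Complex.exp (2 * I * (t:ℂ)) := by
  have h2 : (2 * I * (t:ℂ)) = ((2:ℕ):ℂ) * ((t:ℂ) * I) := by push_cast; ring
  rw [h2, Complex.exp_nat_mul, Complex.exp_mul_I]
  have hz : z = (z.re : ℂ) + (z.im : ℂ) * I := (Complex.re_add_im z).symm
  have hconj : (starRingEnd ℂ) z = (z.re : ℂ) - (z.im : ℂ) * I := by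
    simp [Complex.ext_iff]
  push_cast
  set c := Complex.cos (t:ℂ); set s := Complex.sin (t:ℂ)
  linear_combination (-1 : ℂ) * hz - (c + s*I)^2 * hconj +
    ((z.re:ℂ) + I*(z.im:ℂ)) * Complex.cos_sq_add_sin_sq (t:ℂ) +
    ((z.re:ℂ)*s^2 - 2*(z.im:ℂ)*c*s - I*(z.im:ℂ)*s^2 - 2*(z.re:ℂ)*s^2 + 4*(z.im:ℂ)*c*s + 2*(z.im:ℂ)*s^2*I) * Complex.I_sq

/-- with known pairwise distinct pixel locations, the image is determined by
the Radon-transform moments `m_n(θ_a)`, `n = 0, …, N-1`, `a = 1, …, n+1`, at `N` generic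
fixed angles. -/
theorem pascal_stmt6 (N : ℕ) (z : Fin N → ℂ) (hz : Function.Injective z)
    (θ : Fin N → ℝ)
    (hθ : Function.Injective fun a => Complex.exp (2 * Complex.I * (θ a : ℂ)))
    (ρ ρ' : Fin N → ℝ)
    (h : ∀ n < N, ∀ a : Fin N, (a : ℕ) ≤ n →
      ∑ k, ((z k).re * Real.cos (θ a) + (z k).im * Real.sin (θ a)) ^ n * ρ k
        = ∑ k, ((z k).re * Real.cos (θ a) + (z k).im * Real.sin (θ a)) ^ n * ρ' k) :
    ∀ k, ρ k = ρ' k := by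
  classical
  set c : Fin N → ℂ := fun k => ((ρ k : ℂ) - (ρ' k : ℂ)) with hcdef
  have hB : ∀ n < N, ∀ a : Fin N, (a : ℕ) ≤ n →
      ∑ k, (z k + (starRingEnd ℂ) (z k) * Complex.exp (2 * Complex.I * (θ a : ℂ))) ^ n * c k
        = 0 := by
    intro n hn a ha
    have hr : ∑ k, (((z k).re * Real.cos (θ a) + (z k).im * Real.sin (θ a)) ^ n
        * (ρ k - ρ' k) : ℝ) = 0 := by
      simp only [mul_sub]
      rw [Finset.sum_sub_distrib, h n hn a ha, sub_self]
    calc ∑ k, (z k + (starRingEnd ℂ) (z k) * Complex.exp (2 * Complex.I * (θ a : ℂ))) ^ n * c k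
        = ∑ k, ((((z k).re * Real.cos (θ a) + (z k).im * Real.sin (θ a) : ℝ) : ℂ)) ^ n * c k
            * (2 * Complex.exp ((θ a : ℂ) * Complex.I)) ^ n := by
          refine Finset.sum_congr rfl fun k _ => ?_
          rw [← pascal_key_id (θ a) (z k), mul_pow]; ring
      _ = ((∑ k, ((z k).re * Real.cos (θ a) + (z k).im * Real.sin (θ a)) ^ n
            * (ρ k - ρ' k) : ℝ) : ℂ) * (2 * Complex.exp ((θ a : ℂ) * Complex.I)) ^ n := by
          push_cast [hcdef]
          rw [Finset.sum_mul]
      _ = 0 := by rw [hr]; simp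
  have hC : ∀ n < N, ∑ k, ((starRingEnd ℂ) (z k)) ^ n * c k = 0 := by
    intro n hn
    set p : Polynomial ℂ :=
      ∑ j ∈ Finset.range (n + 1),
        Polynomial.C ((∑ k, c k * (z k) ^ j * ((starRingEnd ℂ) (z k)) ^ (n - j))
          * (n.choose j : ℂ)) * Polynomial.X ^ (n - j) with hp
    have hdeg : p.natDegree ≤ n := by
      apply Polynomial.natDegree_sum_le_of_forall_le
      intro j hj
      refine (Polynomial.natDegree_C_mul_le _ _).trans ?_
      simp only [Polynomial.natDegree_X_pow]
      omega
    have heval : ∀ a : Fin N, (a : ℕ) ≤ n →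
        p.eval (Complex.exp (2 * Complex.I * (θ a : ℂ))) = 0 := by
      intro a ha
      have hB' := hB n hn a ha
      set u := Complex.exp (2 * Complex.I * (θ a : ℂ)) with hu
      rw [hp]
      simp only [Polynomial.eval_finset_sum, Polynomial.eval_mul, Polynomial.eval_C,
        Polynomial.eval_pow, Polynomial.eval_X]
      calc ∑ j ∈ Finset.range (n + 1),
            (∑ k, c k * (z k) ^ j * ((starRingEnd ℂ) (z k)) ^ (n - j)) * (n.choose j : ℂ)
              * u ^ (n - j)
          = ∑ j ∈ Finset.range (n + 1), ∑ k,
              c k * (z k) ^ j * ((starRingEnd ℂ) (z k)) ^ (n - j) * (n.choose j : ℂ)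
                * u ^ (n - j) := by
            refine Finset.sum_congr rfl fun j _ => ?_
            rw [Finset.sum_mul, Finset.sum_mul]
        _ = ∑ k, ∑ j ∈ Finset.range (n + 1),
              c k * (z k) ^ j * ((starRingEnd ℂ) (z k)) ^ (n - j) * (n.choose j : ℂ)
                * u ^ (n - j) := Finset.sum_comm
        _ = ∑ k, (z k + (starRingEnd ℂ) (z k) * u) ^ n * c k := by
            refine Finset.sum_congr rfl fun k _ => ?_
            rw [add_pow, Finset.sum_mul]
            refine Finset.sum_congr rfl fun j hj => ?_
            rw [mul_pow]; ring
        _ = 0 := hB'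
    have hpzero : p = 0 := by
      have hn1 : n + 1 ≤ N := hn
      refine Polynomial.eq_zero_of_natDegree_lt_card_of_eval_eq_zero p
        (f := fun j : Fin (n + 1) => Complex.exp (2 * Complex.I * (θ (Fin.castLE hn1 j) : ℂ)))
        (hθ.comp (Fin.castLE_injective hn1))
        (fun j => heval _ (by simpa [Fin.coe_castLE] using Nat.lt_succ_iff.mp j.isLt)) ?_
      simpa using Nat.lt_succ_of_le hdeg
    have hcoeff : p.coeff n = 0 := by rw [hpzero]; simp
    rw [hp] at hcoeff
    simp only [Polynomial.finset_sum_coeff, Polynomial.coeff_C_mul, Polynomial.coeff_X_pow] at hcoeff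
    rw [Finset.sum_eq_single 0 (fun j hj hj0 => ?_) (by simp)] at hcoeff
    · simpa [mul_comm] using hcoeff
    · have : ¬ (n = n - j) := by
        simp only [Finset.mem_range] at hj
        omega
      simp [this]
  have hw : Function.Injective fun k => (starRingEnd ℂ) (z k) :=
    (starRingEnd ℂ).injective.comp hz
  have hdet : (Matrix.transpose (Matrix.vandermonde fun k => (starRingEnd ℂ) (z k))).det ≠ 0 := by
    rw [Matrix.det_transpose]
    exact Matrix.det_vandermonde_ne_zero_iff.mpr hw
  have hmv : (Matrix.transpose (Matrix.vandermonde fun k => (starRingEnd ℂ) (z k))).mulVec c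
      = 0 := by
    funext n
    simp only [Matrix.mulVec, Matrix.transpose_apply, Matrix.vandermonde_apply,
      dotProduct, Pi.zero_apply]
    exact hC n n.isLt
  have hc0 : c = 0 := Matrix.eq_zero_of_mulVec_eq_zero hdet hmv
  intro k
  have hk : c k = 0 := by rw [hc0]; rfl
  rw [hcdef] at hk
  have hk2 := sub_eq_zero.mp hk
  exact_mod_cast hk2
end

section
/- Let λ_1, λ_2 ∈ ℝ and consider the anisotropically scaled image whose pixel locations are λ_1 x_k + i λ_2 y_k (where z_k = x_k + i y_k) with the same intensities ρ_k. Then its moments μ̂_{j,l} satisfy, for all integers j, l ≥ 0: μ̂_{j,l} = 2^{−(j+l)} Σ_{s=0}^{j} Σ_{t=0}^{l} C(j,s) C(l,t) (λ_1 + λ_2)^{l−t+s} (λ_1 − λ_2)^{j−s+t} μ_{s+t, j+l−s−t}, where C(·,·) denotes the binomial coefficient and μ_{j,l} are the moments of the original image. -/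
open Finset

private lemma pascal_key_s12 (A B z w : ℂ)
    (h1 : 2 * w = A * z + B * (starRingEnd ℂ) z)
    (h2 : 2 * (starRingEnd ℂ) w = B * z + A * (starRingEnd ℂ) z) (j l : ℕ) :
    (2 : ℂ) ^ (j + l) * (w ^ j * (starRingEnd ℂ) w ^ l)
      = ∑ s ∈ range (j + 1), ∑ t ∈ range (l + 1),
          (j.choose s : ℂ) * (l.choose t : ℂ) * A ^ (l - t + s) * B ^ (j - s + t)
            * (z ^ (s + t) * (starRingEnd ℂ) z ^ (j + l - s - t)) := by
  have h : (2 : ℂ) ^ (j + l) * (w ^ j * (starRingEnd ℂ) w ^ l)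
      = (2 * w) ^ j * (2 * (starRingEnd ℂ) w) ^ l := by
    rw [pow_add]; ring
  rw [h, h1, h2, add_pow, add_pow, Finset.sum_mul_sum]
  refine Finset.sum_congr rfl fun s hs => Finset.sum_congr rfl fun t ht => ?_
  have hs' : s ≤ j := Nat.lt_succ_iff.mp (Finset.mem_range.mp hs)
  have ht' : t ≤ l := Nat.lt_succ_iff.mp (Finset.mem_range.mp ht)
  have e1 : j + l - s - t = (j - s) + (l - t) := by omega
  have e2 : l - t + s = (l - t) + s := by omega
  have e3 : j - s + t = (j - s) + t := by omega
  rw [e1, e2, e3, pow_add, pow_add, pow_add, pow_add, mul_pow, mul_pow, mul_pow, mul_pow]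
  ring

/-- transformation of the moments under anisotropic scaling
`x + iy ↦ λ₁ x + i λ₂ y`. -/
theorem pascal_stmt12 (N : ℕ) (z : Fin N → ℂ) (ρ : Fin N → ℝ) (lam₁ lam₂ : ℝ) (j l : ℕ) :
    ∑ k, ((lam₁ * (z k).re : ℝ) + (lam₂ * (z k).im : ℝ) * Complex.I) ^ j
        * ((starRingEnd ℂ)
            ((lam₁ * (z k).re : ℝ) + (lam₂ * (z k).im : ℝ) * Complex.I)) ^ l
        * (ρ k : ℂ)
      = ((2 : ℂ) ^ (j + l))⁻¹ * ∑ s ∈ Finset.range (j + 1), ∑ t ∈ Finset.range (l + 1),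
          (j.choose s : ℂ) * (l.choose t : ℂ)
            * ((lam₁ : ℂ) + (lam₂ : ℂ)) ^ (l - t + s)
            * ((lam₁ : ℂ) - (lam₂ : ℂ)) ^ (j - s + t)
            * ∑ k, z k ^ (s + t) * (starRingEnd ℂ) (z k) ^ (j + l - s - t) * (ρ k : ℂ) := by
  have h2 : ((2 : ℂ) ^ (j + l)) ≠ 0 := pow_ne_zero _ two_ne_zero
  rw [eq_inv_mul_iff_mul_eq₀ h2]
  have key : ∀ k : Fin N,
      (2 : ℂ) ^ (j + l) *
        (((lam₁ * (z k).re : ℝ) + (lam₂ * (z k).im : ℝ) * Complex.I) ^ j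
          * ((starRingEnd ℂ)
              ((lam₁ * (z k).re : ℝ) + (lam₂ * (z k).im : ℝ) * Complex.I)) ^ l) =
      ∑ s ∈ range (j + 1), ∑ t ∈ range (l + 1),
          (j.choose s : ℂ) * (l.choose t : ℂ)
            * ((lam₁ : ℂ) + (lam₂ : ℂ)) ^ (l - t + s)
            * ((lam₁ : ℂ) - (lam₂ : ℂ)) ^ (j - s + t)
            * (z k ^ (s + t) * (starRingEnd ℂ) (z k) ^ (j + l - s - t)) := by
    intro k
    apply pascal_key_s12
    · simp only [map_add, map_mul, Complex.conj_I, Complex.conj_ofReal, Complex.ofReal_mul,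
        Complex.ext_iff, Complex.add_re, Complex.add_im, Complex.sub_re, Complex.sub_im,
        Complex.mul_re, Complex.mul_im, Complex.I_re, Complex.I_im, Complex.ofReal_re,
        Complex.ofReal_im, Complex.conj_re, Complex.conj_im, Complex.re_ofNat, Complex.im_ofNat, Complex.neg_re, Complex.neg_im]
      constructor <;> ring
    · simp only [map_add, map_mul, Complex.conj_I, Complex.conj_ofReal, Complex.ofReal_mul,
        Complex.ext_iff, Complex.add_re, Complex.add_im, Complex.sub_re, Complex.sub_im,
        Complex.mul_re, Complex.mul_im, Complex.I_re, Complex.I_im, Complex.ofReal_re,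
        Complex.ofReal_im, Complex.conj_re, Complex.conj_im, Complex.re_ofNat, Complex.im_ofNat, Complex.neg_re, Complex.neg_im]
      constructor <;> ring
  calc (2 : ℂ) ^ (j + l) *
        ∑ k, ((lam₁ * (z k).re : ℝ) + (lam₂ * (z k).im : ℝ) * Complex.I) ^ j
          * ((starRingEnd ℂ)
              ((lam₁ * (z k).re : ℝ) + (lam₂ * (z k).im : ℝ) * Complex.I)) ^ l
          * (ρ k : ℂ)
      = ∑ k, (∑ s ∈ range (j + 1), ∑ t ∈ range (l + 1),
          (j.choose s : ℂ) * (l.choose t : ℂ)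
            * ((lam₁ : ℂ) + (lam₂ : ℂ)) ^ (l - t + s)
            * ((lam₁ : ℂ) - (lam₂ : ℂ)) ^ (j - s + t)
            * (z k ^ (s + t) * (starRingEnd ℂ) (z k) ^ (j + l - s - t))) * (ρ k : ℂ) := by
        rw [Finset.mul_sum]
        refine Finset.sum_congr rfl fun k _ => ?_
        rw [← key k]; ring
    _ = _ := by
        simp_rw [Finset.sum_mul]
        rw [Finset.sum_comm]
        refine Finset.sum_congr rfl fun s _ => ?_
        rw [Finset.sum_comm]
        refine Finset.sum_congr rfl fun t _ => ?_
        rw [Finset.mul_sum]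
        exact Finset.sum_congr rfl fun k _ => by ring
end

section
/- Let (z_1,…,z_N; ρ_1,…,ρ_N) be a discrete image with nonnegative intensities ρ_k ≥ 0 and μ_{0,0} = Σ_k ρ_k > 0. Then the pixel locations z_k with ρ_k > 0 all lie on a single straight line in the complex plane if and only if |μ̃_{0,2}| = μ̃_{1,1}, where μ̃_{0,2} and μ̃_{1,1} are the centralized moments of the image. -/
open Complex Finset

private lemma pascal14_re_eq_abs {x : ℂ} (h : x.re = ‖x‖) :
    x = (‖x‖ : ℂ) := by
  have h2 : x.im = 0 := by
    have := Complex.sq_norm x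
    rw [Complex.normSq_apply, ← h] at this
    nlinarith [sq_nonneg x.im]
  apply Complex.ext <;> simp [h2, ← h]

/-- the pixels with positive intensity lie on a single straight line iff
`|μ̃_{0,2}| = μ̃_{1,1}`. -/
theorem pascal_stmt14 (N : ℕ) (z : Fin N → ℂ) (ρ : Fin N → ℝ)
    (hρ : ∀ k, 0 ≤ ρ k) (hμ : 0 < ∑ k, ρ k)
    (c : ℂ) (hc : c = (∑ k, z k * (ρ k : ℂ)) / (∑ k, (ρ k : ℂ))) :
    (∃ a b : ℂ, ‖b‖ = 1 ∧ ∀ k, 0 < ρ k → ∃ t : ℝ, z k = a + (t : ℂ) * b)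
      ↔ ‖∑ k, ((starRingEnd ℂ) (z k - c)) ^ 2 * (ρ k : ℂ)‖
          = ∑ k, Complex.normSq (z k - c) * ρ k := by
  classical
  have hρsumC : (∑ k, (ρ k : ℂ)) = ((∑ k, ρ k : ℝ) : ℂ) := by push_cast; ring
  have hρc : (∑ k, (ρ k : ℂ)) ≠ 0 := by
    rw [hρsumC]; exact_mod_cast hμ.ne'
  constructor
  · rintro ⟨a, b, hb, hline⟩
    have ht : ∀ k, ∃ t : ℝ, z k * (ρ k : ℂ) = (a + (t : ℂ) * b) * (ρ k : ℂ) := by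
      intro k
      rcases lt_or_eq_of_le (hρ k) with h | h
      · obtain ⟨t, ht⟩ := hline k h
        exact ⟨t, by rw [ht]⟩
      · exact ⟨0, by rw [← h]; simp⟩
    choose t ht using ht
    set T : ℝ := (∑ k, t k * ρ k) / (∑ k, ρ k) with hT
    have hsum : (∑ k, z k * (ρ k : ℂ))
        = a * (∑ k, (ρ k : ℂ)) + ((∑ k, t k * ρ k : ℝ) : ℂ) * b := by
      rw [Finset.sum_congr rfl fun k _ => ht k]
      push_cast
      rw [Finset.sum_congr rfl (fun k _ => by ring :
        ∀ k ∈ Finset.univ, (a + (t k : ℂ) * b) * (ρ k : ℂ)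
          = a * (ρ k : ℂ) + b * ((t k : ℂ) * (ρ k : ℂ)))]
      rw [Finset.sum_add_distrib, ← Finset.mul_sum, ← Finset.mul_sum]
      ring
    have hcline : c = a + (T : ℝ) * b := by
      rw [hc, hsum, hT]
      have : ((((∑ k, t k * ρ k) / ∑ k, ρ k) : ℝ) : ℂ)
          = ((∑ k, t k * ρ k : ℝ) : ℂ) / (∑ k, (ρ k : ℂ)) := by
        rw [hρsumC]; push_cast; ring
      rw [this]
      field_simp
    have hb2 : Complex.normSq b = 1 := by
      have := Complex.sq_norm b
      rw [hb] at this; simpa using this.symm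
    have key : ∀ k, ((starRingEnd ℂ) (z k - c)) ^ 2 * (ρ k : ℂ)
        = ((Complex.normSq (z k - c) * ρ k : ℝ) : ℂ) * ((starRingEnd ℂ) b) ^ 2 := by
      intro k
      rcases lt_or_eq_of_le (hρ k) with h | h
      · have hck : (ρ k : ℂ) ≠ 0 := by exact_mod_cast h.ne'
        have hzk : z k = a + (t k : ℂ) * b := mul_right_cancel₀ hck (ht k)
        have hwk : z k - c = ((t k - T : ℝ) : ℂ) * b := by
          rw [hzk, hcline]; push_cast; ring
        have hns : Complex.normSq (z k - c) = (t k - T) ^ 2 := by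
          rw [hwk, Complex.normSq_mul, hb2, Complex.normSq_ofReal]; ring
        rw [hns, hwk, map_mul, Complex.conj_ofReal]
        push_cast
        ring
      · rw [← h]; simp
    rw [Finset.sum_congr rfl fun k _ => key k, ← Finset.sum_mul, norm_mul, norm_pow,
      Complex.norm_conj, hb, one_pow, mul_one, ← Complex.ofReal_sum, Complex.norm_real, Real.norm_eq_abs,
      _root_.abs_of_nonneg]
    exact Finset.sum_nonneg fun k _ => mul_nonneg (Complex.normSq_nonneg _) (hρ k)
  · intro habs
    set w : Fin N → ℂ := fun k => z k - c with hw
    set S : ℂ := ∑ k, ((starRingEnd ℂ) (w k)) ^ 2 * (ρ k : ℂ) with hS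
    set M : ℝ := ∑ k, Complex.normSq (w k) * ρ k with hM
    by_cases hS0 : S = 0
    · have hM0 : M = 0 := by rw [← habs, hS0]; simp
      refine ⟨c, 1, by simp, fun k hk => ⟨0, ?_⟩⟩
      have hterm : Complex.normSq (w k) * ρ k = 0 :=
        (Finset.sum_eq_zero_iff_of_nonneg
          (fun j _ => mul_nonneg (Complex.normSq_nonneg (w j)) (hρ j))).mp
          (show (∑ j, Complex.normSq (w j) * ρ j) = 0 from hM ▸ hM0) k (Finset.mem_univ k)
      have hns0 : Complex.normSq (w k) = 0 := by
        rcases mul_eq_zero.mp hterm with h | h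
        · exact h
        · exact absurd h hk.ne'
      have hzk : z k = c := by
        have := Complex.normSq_eq_zero.mp hns0
        have : z k - c = 0 := this
        linear_combination this
      simp [hzk]
    · have habsS : ‖S‖ = M := habs
      have hMpos : 0 < M := by
        rw [← habsS]; exact norm_pos_iff.mpr hS0
      set u : ℂ := (starRingEnd ℂ) S / ((‖S‖ : ℝ) : ℂ) with hu
      have hu1 : ‖u‖ = 1 := by
        rw [hu, norm_div, Complex.norm_conj, Complex.norm_real, Real.norm_eq_abs,
          _root_.abs_of_nonneg (norm_nonneg S)]
        exact div_self (norm_ne_zero_iff.mpr hS0)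
      have huS : u * S = ((M : ℝ) : ℂ) := by
        rw [hu, div_mul_eq_mul_div, ← Complex.normSq_eq_conj_mul_self,
          Complex.normSq_eq_norm_sq, habsS]
        have hMne : ((M : ℝ) : ℂ) ≠ 0 := by exact_mod_cast hMpos.ne'
        push_cast
        field_simp
      set f : Fin N → ℝ := fun k => Complex.normSq (w k) * ρ k
        - (u * ((starRingEnd ℂ) (w k)) ^ 2 * (ρ k : ℂ)).re with hf
      have habsterm : ∀ k, ‖u * ((starRingEnd ℂ) (w k)) ^ 2 * (ρ k : ℂ)‖
          = Complex.normSq (w k) * ρ k := by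
        intro k
        rw [norm_mul, norm_mul, hu1, one_mul, norm_pow, Complex.norm_conj,
          Complex.norm_real, Real.norm_eq_abs, _root_.abs_of_nonneg (hρ k), Complex.sq_norm]
      have hfnonneg : ∀ k, 0 ≤ f k := by
        intro k
        have h1 := Complex.re_le_norm (u * ((starRingEnd ℂ) (w k)) ^ 2 * (ρ k : ℂ))
        rw [habsterm k] at h1
        simp only [hf]
        linarith
      have hfsum : ∑ k, f k = 0 := by
        have h1 : (∑ i, u * ((starRingEnd ℂ) (w i)) ^ 2 * (ρ i : ℂ)) = u * S := by
          rw [hS, Finset.mul_sum]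
          exact Finset.sum_congr rfl fun i _ => by ring
        simp only [hf]
        rw [Finset.sum_sub_distrib, ← Complex.re_sum, h1, huS, Complex.ofReal_re]
        rw [hM]
        ring
      have hfzero := (Finset.sum_eq_zero_iff_of_nonneg (fun k _ => hfnonneg k)).mp hfsum
      obtain ⟨b, hbu⟩ := IsAlgClosed.exists_pow_nat_eq (k := ℂ) u (n := 2) (by norm_num)
      have hbabs : ‖b‖ = 1 := by
        have : ‖b‖ ^ 2 = 1 := by rw [← norm_pow, hbu, hu1]
        nlinarith [norm_nonneg b]
      have hbne : b ≠ 0 := by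
        intro h; rw [h] at hbabs; simp at hbabs
      refine ⟨c, b, hbabs, fun k hk => ?_⟩
      have hfk := hfzero k (Finset.mem_univ k)
      simp only [hf] at hfk
      set v : ℂ := u * ((starRingEnd ℂ) (w k)) ^ 2 * (ρ k : ℂ) with hv
      have hvabs : ‖v‖ = Complex.normSq (w k) * ρ k := habsterm k
      have hvre : v.re = ‖v‖ := by rw [hvabs]; linarith
      have hveq : v = ((Complex.normSq (w k) * ρ k : ℝ) : ℂ) := by
        rw [← hvabs]; exact pascal14_re_eq_abs hvre
      have hck : (ρ k : ℂ) ≠ 0 := by exact_mod_cast hk.ne'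
      have hueq : u * ((starRingEnd ℂ) (w k)) ^ 2 = ((Complex.normSq (w k) : ℝ) : ℂ) := by
        apply mul_right_cancel₀ hck
        rw [← hv, hveq]; push_cast; ring
      have hconj : (starRingEnd ℂ) u * (w k) ^ 2 = ((Complex.normSq (w k) : ℝ) : ℂ) := by
        have := congrArg (starRingEnd ℂ) hueq
        simpa [map_mul, map_pow, Complex.conj_conj, Complex.conj_ofReal] using this
      have huu : (starRingEnd ℂ) u * u = 1 := by
        rw [← Complex.normSq_eq_conj_mul_self, Complex.normSq_eq_norm_sq, hu1]
        norm_num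
      have hwu : (w k) ^ 2 = ((Complex.normSq (w k) : ℝ) : ℂ) * u := by
        calc (w k) ^ 2 = ((starRingEnd ℂ) u * u) * (w k) ^ 2 := by rw [huu]; ring
          _ = ((starRingEnd ℂ) u * (w k) ^ 2) * u := by ring
          _ = ((Complex.normSq (w k) : ℝ) : ℂ) * u := by rw [hconj]
      set r : ℝ := ‖w k‖ with hr
      have hx2 : (w k / b) ^ 2 = ((r : ℝ) : ℂ) ^ 2 := by
        have hb2 : (b : ℂ) ^ 2 ≠ 0 := pow_ne_zero 2 hbne
        rw [div_pow, hwu, ← hbu, mul_div_assoc, div_self hb2, mul_one, hr]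
        norm_cast
        exact (Complex.sq_norm _).symm
      have hcases : (w k / b - (r : ℂ)) * (w k / b + (r : ℂ)) = 0 := by
        linear_combination hx2
      have hwb : ∀ s : ℝ, w k / b = (s : ℂ) → z k = c + (s : ℂ) * b := by
        intro s hs
        have : w k = (s : ℂ) * b := by
          rw [← hs]; field_simp
        have hwk : z k - c = (s : ℂ) * b := this
        linear_combination hwk
      rcases mul_eq_zero.mp hcases with h | h
      · exact ⟨r, hwb r (by linear_combination h)⟩
      · refine ⟨-r, hwb (-r) ?_⟩
        push_cast
        linear_combination h
end

section
/- Let (z_1,…,z_N; ρ_1,…,ρ_N) be a discrete image with pairwise distinct pixel locations, and let Ñ ≥ 1 be an integer. Then the set of nonzero-intensity weighted pixels {(z_k, ρ_k) : ρ_k ≠ 0} is invariant under rotation about the origin by 2π/Ñ (i.e. equals {(e^{2πi/Ñ} z_k, ρ_k) : ρ_k ≠ 0}) if and only if μ_{j,l} = 0 for every pair of integers j, l ≥ 0 for which (l − j)/Ñ is not an integer. -/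
open Complex Finset

noncomputable def pomega (M : ℕ) : ℂ := Complex.exp (2 * Real.pi * Complex.I / (M : ℂ))

lemma pomega_ne_zero (M : ℕ) : pomega M ≠ 0 := Complex.exp_ne_zero _

lemma pascal_aux_pow (M : ℕ) (hM : 1 ≤ M) (m : ℤ) :
    pomega M ^ m = 1 ↔ (M : ℤ) ∣ m := by
  have hMc : (M : ℂ) ≠ 0 := Nat.cast_ne_zero.mpr (by omega)
  have h2 : (2 * (Real.pi : ℂ) * Complex.I) ≠ 0 := by
    simp [Real.pi_ne_zero, Complex.I_ne_zero, Complex.ofReal_ne_zero]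
  rw [pomega, ← Complex.exp_int_mul, Complex.exp_eq_one_iff]
  constructor
  · rintro ⟨n, hn⟩
    refine ⟨n, ?_⟩
    have hc : (m : ℂ) = M * n := by
      field_simp at hn
      apply mul_right_cancel₀ h2
      rw [hn]
    exact_mod_cast hc
  · rintro ⟨n, rfl⟩
    exact ⟨n, by push_cast; field_simp⟩

lemma pascal_aux_conj (M : ℕ) :
    (starRingEnd ℂ) (pomega M) = (pomega M)⁻¹ := by
  rw [pomega, ← Complex.exp_conj, ← Complex.exp_neg]
  congr 1
  simp [map_div₀, Complex.conj_I, neg_div, map_ofNat]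

lemma pascal_aux_mono (M : ℕ) (j l : ℕ) :
    pomega M ^ j * (starRingEnd ℂ) (pomega M) ^ l = pomega M ^ ((j : ℤ) - (l : ℤ)) := by
  rw [pascal_aux_conj, zpow_sub₀ (pomega_ne_zero M), zpow_natCast, zpow_natCast, inv_pow,
    div_eq_mul_inv]

lemma pascal_aux_fac (M : ℕ) (j l : ℕ) (w r : ℂ) :
    (pomega M * w) ^ j * (starRingEnd ℂ) (pomega M * w) ^ l * r
      = pomega M ^ ((j : ℤ) - (l : ℤ)) * (w ^ j * (starRingEnd ℂ) w ^ l * r) := by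
  rw [← pascal_aux_mono]
  simp only [mul_pow, map_mul]
  ring


def momFun (j l : ℕ) : ℂ → ℂ := fun w => w ^ j * (starRingEnd ℂ) w ^ l

def momSet : Set (ℂ → ℂ) := {g | ∃ j l : ℕ, g = momFun j l}

lemma momSpan_mul {g₁ g₂ : ℂ → ℂ} (h1 : g₁ ∈ Submodule.span ℂ momSet)
    (h2 : g₂ ∈ Submodule.span ℂ momSet) : g₁ * g₂ ∈ Submodule.span ℂ momSet := by
  induction h1 using Submodule.span_induction with
  | mem x hx =>
    induction h2 using Submodule.span_induction with
    | mem y hy =>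
      obtain ⟨j1, l1, rfl⟩ := hx
      obtain ⟨j2, l2, rfl⟩ := hy
      apply Submodule.subset_span
      exact ⟨j1 + j2, l1 + l2, by funext w; simp [momFun, pow_add]; ring⟩
    | zero => simpa using Submodule.zero_mem _
    | add y1 y2 hy1 hy2 ih1 ih2 => rw [mul_add]; exact Submodule.add_mem _ ih1 ih2
    | smul a y hy ih => rw [mul_smul_comm]; exact Submodule.smul_mem _ _ ih
  | zero => simpa using Submodule.zero_mem _
  | add x1 x2 hx1 hx2 ih1 ih2 => rw [add_mul]; exact Submodule.add_mem _ ih1 ih2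
  | smul a x hx ih => rw [smul_mul_assoc]; exact Submodule.smul_mem _ _ ih

lemma momSpan_one : (1 : ℂ → ℂ) ∈ Submodule.span ℂ momSet :=
  Submodule.subset_span ⟨0, 0, by funext w; simp [momFun]⟩

lemma momSpan_factor (t : ℂ) :
    (fun w => (w - t) * ((starRingEnd ℂ) w - (starRingEnd ℂ) t)) ∈ Submodule.span ℂ momSet := by
  have : (fun w => (w - t) * ((starRingEnd ℂ) w - (starRingEnd ℂ) t))
      = momFun 1 1 + (-(starRingEnd ℂ) t) • momFun 1 0 + (-t) • momFun 0 1
        + (t * (starRingEnd ℂ) t) • momFun 0 0 := by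
    funext w; simp [momFun]; ring
  rw [this]
  refine Submodule.add_mem _ (Submodule.add_mem _ (Submodule.add_mem _ ?_ ?_) ?_) ?_
  · exact Submodule.subset_span ⟨1, 1, rfl⟩
  · exact Submodule.smul_mem _ _ (Submodule.subset_span ⟨1, 0, rfl⟩)
  · exact Submodule.smul_mem _ _ (Submodule.subset_span ⟨0, 1, rfl⟩)
  · exact Submodule.smul_mem _ _ (Submodule.subset_span ⟨0, 0, rfl⟩)

lemma momSpan_prod (T : Finset ℂ) :
    (fun w => ∏ t ∈ T, ((w - t) * ((starRingEnd ℂ) w - (starRingEnd ℂ) t)))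
      ∈ Submodule.span ℂ momSet := by
  have : (fun w => ∏ t ∈ T, ((w - t) * ((starRingEnd ℂ) w - (starRingEnd ℂ) t)))
      = ∏ t ∈ T, (fun w => (w - t) * ((starRingEnd ℂ) w - (starRingEnd ℂ) t)) := by
    funext w; rw [Finset.prod_apply]
  rw [this]
  refine Finset.prod_induction _ _ (fun a b ha hb => momSpan_mul ha hb) momSpan_one
    (fun t _ => momSpan_factor t)

/-- an image (with pairwise distinct pixel locations) has `M`-fold rotation
symmetry about the origin iff `μ_{j,l} = 0` whenever `(l - j)/M` is not an integer. -/
theorem pascal_stmt16 (N : ℕ) (z : Fin N → ℂ) (ρ : Fin N → ℝ)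
    (hz : Function.Injective z) (M : ℕ) (hM : 1 ≤ M) :
    ({p : ℂ × ℝ | ∃ k, ρ k ≠ 0 ∧ p = (z k, ρ k)}
        = {p : ℂ × ℝ | ∃ k, ρ k ≠ 0 ∧
            p = (Complex.exp (2 * Real.pi * Complex.I / (M : ℂ)) * z k, ρ k)})
      ↔ ∀ j l : ℕ, ¬ ((M : ℤ) ∣ ((l : ℤ) - (j : ℤ))) →
          ∑ k, z k ^ j * (starRingEnd ℂ) (z k) ^ l * (ρ k : ℂ) = 0 := by
  set ω : ℂ := Complex.exp (2 * Real.pi * Complex.I / (M : ℂ)) with hωdef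
  have hωeq : ω = pomega M := rfl
  have hωne : ω ≠ 0 := Complex.exp_ne_zero _
  have hωz_inj : Function.Injective (fun k => ω * z k) :=
    fun k1 k2 h => hz (mul_left_cancel₀ hωne h)
  constructor
  · -- symmetry ⇒ moments vanish
    intro hset j l hdvd
    have hsel : ∀ k, ρ k ≠ 0 → ∃ k', ρ k' ≠ 0 ∧ z k = ω * z k' ∧ ρ k = ρ k' := by
      intro k hk
      have hmem : ((z k, ρ k) : ℂ × ℝ) ∈
          {p : ℂ × ℝ | ∃ k, ρ k ≠ 0 ∧ p = (ω * z k, ρ k)} := by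
        rw [← hset]; exact ⟨k, hk, rfl⟩
      obtain ⟨k', hk', hp⟩ := hmem
      exact ⟨k', hk', congrArg Prod.fst hp, congrArg Prod.snd hp⟩
    classical
    set e : Fin N → Fin N := fun k => if hk : ρ k ≠ 0 then (hsel k hk).choose else k with hedef
    have he1 : ∀ k (hk : ρ k ≠ 0), ρ (e k) ≠ 0 ∧ z k = ω * z (e k) ∧ ρ k = ρ (e k) := by
      intro k hk
      simp only [hedef, dif_pos hk]
      exact (hsel k hk).choose_spec
    have he0 : ∀ k, ρ k = 0 → e k = k := by
      intro k hk; simp [hedef, hk]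
    have einj : Function.Injective e := by
      intro k1 k2 hE
      by_cases h1 : ρ k1 ≠ 0 <;> by_cases h2 : ρ k2 ≠ 0
      · obtain ⟨_, hz1, _⟩ := he1 k1 h1
        obtain ⟨_, hz2, _⟩ := he1 k2 h2
        exact hz (by rw [hz1, hz2, hE])
      · exfalso
        push_neg at h2
        rw [he0 k2 h2] at hE
        exact (he1 k1 h1).1 (hE ▸ h2)
      · exfalso
        push_neg at h1
        rw [he0 k1 h1] at hE
        exact (he1 k2 h2).1 (hE ▸ h1)
      · push_neg at h1 h2
        rw [← he0 k1 h1, ← he0 k2 h2, hE]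
    have ebij : Function.Bijective e := Finite.injective_iff_bijective.mp einj
    have hre : ∑ k, z k ^ j * (starRingEnd ℂ) (z k) ^ l * (ρ k : ℂ)
        = ∑ k, (ω * z k) ^ j * (starRingEnd ℂ) (ω * z k) ^ l * (ρ k : ℂ) := by
      apply Fintype.sum_bijective e ebij
      intro k
      by_cases hk : ρ k ≠ 0
      · obtain ⟨_, hz1, hρ1⟩ := he1 k hk
        rw [← hz1, ← hρ1]
      · push_neg at hk
        rw [he0 k hk, hk]
        simp
    have hfac : ∑ k, (ω * z k) ^ j * (starRingEnd ℂ) (ω * z k) ^ l * (ρ k : ℂ)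
        = ω ^ ((j : ℤ) - (l : ℤ)) * ∑ k, z k ^ j * (starRingEnd ℂ) (z k) ^ l * (ρ k : ℂ) := by
      rw [Finset.mul_sum]
      apply Finset.sum_congr rfl
      intro k _
      rw [hωeq]
      exact pascal_aux_fac M j l (z k) (ρ k)
    rw [hfac] at hre
    have hne1 : ω ^ ((j : ℤ) - (l : ℤ)) ≠ 1 := by
      intro hd
      rw [hωeq] at hd
      exact hdvd ((dvd_sub_comm).mp ((pascal_aux_pow M hM _).mp hd))
    have : (ω ^ ((j : ℤ) - (l : ℤ)) - 1) * ∑ k, z k ^ j * (starRingEnd ℂ) (z k) ^ l * (ρ k : ℂ)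
        = 0 := by linear_combination -hre
    rcases mul_eq_zero.mp this with h | h
    · exact absurd (by linear_combination h) hne1
    · exact h
  · -- moments vanish ⇒ symmetry
    intro h
    classical
    -- moments are invariant under the rotation
    have hmom : ∀ j l : ℕ, ∑ k, (ω * z k) ^ j * (starRingEnd ℂ) (ω * z k) ^ l * (ρ k : ℂ)
        = ∑ k, z k ^ j * (starRingEnd ℂ) (z k) ^ l * (ρ k : ℂ) := by
      intro j l
      have hfac : ∑ k, (ω * z k) ^ j * (starRingEnd ℂ) (ω * z k) ^ l * (ρ k : ℂ)
          = ω ^ ((j : ℤ) - (l : ℤ)) * ∑ k, z k ^ j * (starRingEnd ℂ) (z k) ^ l * (ρ k : ℂ) := by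
        rw [Finset.mul_sum]
        apply Finset.sum_congr rfl
        intro k _
        rw [hωeq]
        exact pascal_aux_fac M j l (z k) (ρ k)
      rw [hfac]
      by_cases hd : (M : ℤ) ∣ ((l : ℤ) - (j : ℤ))
      · rw [hωeq, (pascal_aux_pow M hM _).mpr ((dvd_sub_comm).mp hd), one_mul]
      · rw [h j l hd, mul_zero]
    -- linear functionals agree on the span
    have hg : ∀ g ∈ Submodule.span ℂ momSet,
        ∑ k, g (ω * z k) * (ρ k : ℂ) = ∑ k, g (z k) * (ρ k : ℂ) := by
      intro g hgm
      induction hgm using Submodule.span_induction with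
      | mem x hx =>
        obtain ⟨j, l, rfl⟩ := hx
        exact hmom j l
      | zero => simp
      | add x y hx hy ihx ihy =>
        simp only [Pi.add_apply, add_mul, Finset.sum_add_distrib, ihx, ihy]
      | smul a x hx ih =>
        simp only [Pi.smul_apply, smul_eq_mul, mul_assoc, ← Finset.mul_sum, ih]
    -- weight functions agree
    have hW : ∀ c : ℂ, ∑ k, (if z k = c then (ρ k : ℂ) else 0)
        = ∑ k, (if ω * z k = c then (ρ k : ℂ) else 0) := by
      intro c
      set T : Finset ℂ :=
        (Finset.univ.image z ∪ Finset.univ.image (fun k => ω * z k)).erase c with hT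
      set f : ℂ → ℂ :=
        fun w => ∏ t ∈ T, ((w - t) * ((starRingEnd ℂ) w - (starRingEnd ℂ) t)) with hf
      have hfx : ∀ w : ℂ, w ∈ T → f w = 0 := by
        intro w hw
        exact Finset.prod_eq_zero hw (by simp)
      have hfc : f c ≠ 0 := by
        apply Finset.prod_ne_zero_iff.mpr
        intro t ht
        have htc : t ≠ c := Finset.ne_of_mem_erase ht
        apply mul_ne_zero (sub_ne_zero.mpr htc.symm)
        exact sub_ne_zero.mpr fun hh => htc.symm (star_injective hh)
      have key := hg f (momSpan_prod T)
      have h1 : ∑ k, f (z k) * (ρ k : ℂ) = f c * ∑ k, (if z k = c then (ρ k : ℂ) else 0) := by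
        rw [Finset.mul_sum]
        apply Finset.sum_congr rfl
        intro k _
        by_cases hk : z k = c
        · rw [if_pos hk, hk]
        · rw [if_neg hk, mul_zero, hfx _ ?_, zero_mul]
          exact Finset.mem_erase.mpr ⟨hk, Finset.mem_union_left _ (Finset.mem_image_of_mem z (Finset.mem_univ k))⟩
      have h2 : ∑ k, f (ω * z k) * (ρ k : ℂ)
          = f c * ∑ k, (if ω * z k = c then (ρ k : ℂ) else 0) := by
        rw [Finset.mul_sum]
        apply Finset.sum_congr rfl
        intro k _
        by_cases hk : ω * z k = c
        · rw [if_pos hk, hk]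
        · rw [if_neg hk, mul_zero, hfx _ ?_, zero_mul]
          exact Finset.mem_erase.mpr ⟨hk, Finset.mem_union_right _
            (Finset.mem_image_of_mem (fun k => ω * z k) (Finset.mem_univ k))⟩
      rw [h1, h2] at key
      exact mul_left_cancel₀ hfc key.symm
    -- conclude set equality
    ext p
    simp only [Set.mem_setOf_eq]
    constructor
    · rintro ⟨k, hk, rfl⟩
      have hL : ∑ k', (if z k' = z k then (ρ k' : ℂ) else 0) = (ρ k : ℂ) := by
        rw [Finset.sum_eq_single_of_mem k (Finset.mem_univ k)]
        · rw [if_pos rfl]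
        · intro b _ hb
          exact if_neg (fun hbe => hb (hz hbe))
      have hR := (hW (z k)).symm.trans hL
      have hRne : ∑ k', (if ω * z k' = z k then (ρ k' : ℂ) else 0) ≠ 0 := by
        rw [hR]; exact_mod_cast hk
      obtain ⟨k', _, hk'⟩ := Finset.exists_ne_zero_of_sum_ne_zero hRne
      have hzk' : ω * z k' = z k := by
        by_contra hc
        exact hk' (if_neg hc)
      have hρk' : (ρ k' : ℂ) = (ρ k : ℂ) := by
        rw [← hR, Finset.sum_eq_single_of_mem k' (Finset.mem_univ k')]
        · rw [if_pos hzk']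
        · intro b _ hb
          refine if_neg (fun hbe => hb ?_)
          exact hωz_inj (hbe.trans hzk'.symm)
      have hρ : ρ k' = ρ k := by exact_mod_cast hρk'
      exact ⟨k', by rw [hρ]; exact hk, by rw [hzk', hρ]⟩
    · rintro ⟨k, hk, rfl⟩
      have hL : ∑ k', (if ω * z k' = ω * z k then (ρ k' : ℂ) else 0) = (ρ k : ℂ) := by
        rw [Finset.sum_eq_single_of_mem k (Finset.mem_univ k)]
        · rw [if_pos rfl]
        · intro b _ hb
          exact if_neg (fun hbe => hb (hωz_inj hbe))
      have hR := (hW (ω * z k)).trans hL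
      have hRne : ∑ k', (if z k' = ω * z k then (ρ k' : ℂ) else 0) ≠ 0 := by
        rw [hR]; exact_mod_cast hk
      obtain ⟨k', _, hk'⟩ := Finset.exists_ne_zero_of_sum_ne_zero hRne
      have hzk' : z k' = ω * z k := by
        by_contra hc
        exact hk' (if_neg hc)
      have hρk' : (ρ k' : ℂ) = (ρ k : ℂ) := by
        rw [← hR, Finset.sum_eq_single_of_mem k' (Finset.mem_univ k')]
        · rw [if_pos hzk']
        · intro b _ hb
          refine if_neg (fun hbe => hb ?_)
          exact hz (hbe.trans hzk'.symm)
      have hρ : ρ k' = ρ k := by exact_mod_cast hρk'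
      exact ⟨k', by rw [hρ]; exact hk, by rw [hzk', hρ]⟩
end

section
/- Let (z_1,…,z_N; ρ_1,…,ρ_N) be a discrete image with pairwise distinct pixel locations, and let θ_0 ∈ ℝ. Then the set of nonzero-intensity weighted pixels {(z_k, ρ_k) : ρ_k ≠ 0} is invariant under reflection about the line through the origin at angle θ_0 (i.e. equals {(\overline{z_k} e^{2iθ_0}, ρ_k) : ρ_k ≠ 0}) if and only if for all integers j, l ≥ 0: Re(μ_{j,l}) sin((l−j)θ_0) + Im(μ_{j,l}) cos((l−j)θ_0) = 0 (equivalently, tan((l−j)θ_0) = −Im(μ_{j,l})/Re(μ_{j,l}) whenever Re(μ_{j,l}) ≠ 0). -/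
open Complex Finset

private lemma pim (μ : ℂ) (φ : ℝ) :
    (μ * Complex.exp (φ * Complex.I)).im = μ.re * Real.sin φ + μ.im * Real.cos φ := by
  rw [Complex.exp_mul_I]
  simp [Complex.add_im, Complex.mul_im, Complex.cos_ofReal_re, Complex.sin_ofReal_re]

private lemma conj_phi (φ : ℝ) : (starRingEnd ℂ) ((φ:ℂ) * Complex.I) = -(φ:ℂ) * Complex.I := by
  simp

private lemma cond_iff (μ : ℂ) (φ : ℝ) :
    μ.re * Real.sin φ + μ.im * Real.cos φ = 0 ↔
    μ = (starRingEnd ℂ) μ * Complex.exp ((-2 * φ : ℝ) * Complex.I) := by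
  rw [← pim, ← Complex.conj_eq_iff_im]
  have hne : Complex.exp ((φ:ℂ) * Complex.I) ≠ 0 := Complex.exp_ne_zero _
  have key : (starRingEnd ℂ) (μ * Complex.exp ((φ:ℂ) * Complex.I))
      = (starRingEnd ℂ) μ * Complex.exp (-(φ:ℂ) * Complex.I) := by
    rw [map_mul, ← Complex.exp_conj, conj_phi]
  have e2 : Complex.exp ((-2 * φ : ℝ) * Complex.I) * Complex.exp ((φ:ℂ) * Complex.I)
      = Complex.exp (-(φ:ℂ) * Complex.I) := by
    rw [← Complex.exp_add]; push_cast; ring_nf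
  constructor
  · intro h
    apply mul_right_cancel₀ hne
    rw [mul_assoc, e2, ← key, h]
  · intro h
    rw [key]
    nth_rewrite 2 [h]
    rw [mul_assoc, e2]

private lemma sum_poly {N : ℕ} (v : Fin N → ℂ) (ρ : Fin N → ℝ) (p : Polynomial ℂ) {n : ℕ}
    (hn : p.natDegree < n) :
    ∑ k, (ρ k : ℂ) * (p.eval (v k) * (starRingEnd ℂ) (p.eval (v k)))
      = ∑ j ∈ range n, ∑ l ∈ range n, p.coeff j * (starRingEnd ℂ) (p.coeff l)
          * (∑ k, v k ^ j * (starRingEnd ℂ) (v k) ^ l * (ρ k : ℂ)) := by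
  have step : ∀ k : Fin N, (ρ k : ℂ) * (p.eval (v k) * (starRingEnd ℂ) (p.eval (v k)))
      = ∑ j ∈ range n, ∑ l ∈ range n, p.coeff j * (starRingEnd ℂ) (p.coeff l)
          * (v k ^ j * (starRingEnd ℂ) (v k) ^ l * (ρ k : ℂ)) := by
    intro k
    rw [Polynomial.eval_eq_sum_range' hn, map_sum, Finset.sum_mul_sum, Finset.mul_sum]
    refine Finset.sum_congr rfl fun j _ => ?_
    rw [Finset.mul_sum]
    refine Finset.sum_congr rfl fun l _ => ?_
    simp only [map_mul, map_pow]
    ring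
  calc ∑ k, (ρ k : ℂ) * (p.eval (v k) * (starRingEnd ℂ) (p.eval (v k)))
      = ∑ k, ∑ j ∈ range n, ∑ l ∈ range n, p.coeff j * (starRingEnd ℂ) (p.coeff l)
          * (v k ^ j * (starRingEnd ℂ) (v k) ^ l * (ρ k : ℂ)) :=
        Finset.sum_congr rfl fun k _ => step k
    _ = ∑ j ∈ range n, ∑ l ∈ range n, p.coeff j * (starRingEnd ℂ) (p.coeff l)
          * (∑ k, v k ^ j * (starRingEnd ℂ) (v k) ^ l * (ρ k : ℂ)) := by
        rw [Finset.sum_comm]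
        refine Finset.sum_congr rfl fun j _ => ?_
        rw [Finset.sum_comm]
        refine Finset.sum_congr rfl fun l _ => ?_
        rw [Finset.mul_sum]

private lemma mass_eq {N : ℕ} (z w : Fin N → ℂ) (ρ : Fin N → ℝ)
    (M : ∀ j l : ℕ, ∑ k, z k ^ j * (starRingEnd ℂ) (z k) ^ l * (ρ k : ℂ)
        = ∑ k, w k ^ j * (starRingEnd ℂ) (w k) ^ l * (ρ k : ℂ)) (a : ℂ) :
    ∑ k, (if z k = a then (ρ k : ℂ) else 0) = ∑ k, (if w k = a then (ρ k : ℂ) else 0) := by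
  set T : Finset ℂ := (Finset.image z univ ∪ Finset.image w univ).erase a with hT
  set p : Polynomial ℂ := ∏ u ∈ T, (Polynomial.X - Polynomial.C u) with hp
  have hpa : p.eval a ≠ 0 := by
    rw [hp, Polynomial.eval_prod]
    refine Finset.prod_ne_zero_iff.2 fun u hu => ?_
    simp only [Polynomial.eval_sub, Polynomial.eval_X, Polynomial.eval_C]
    exact sub_ne_zero.2 (Ne.symm (Finset.ne_of_mem_erase hu))
  have hFa : p.eval a * (starRingEnd ℂ) (p.eval a) ≠ 0 :=
    mul_ne_zero hpa (by simpa using hpa)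
  have hzero : ∀ x : ℂ, x ≠ a → x ∈ Finset.image z univ ∪ Finset.image w univ →
      p.eval x = 0 := by
    intro x hx hmem
    have hxT : x ∈ T := Finset.mem_erase.2 ⟨hx, hmem⟩
    rw [hp, Polynomial.eval_prod]
    refine Finset.prod_eq_zero hxT ?_
    simp
  have hn : p.natDegree < p.natDegree + 1 := Nat.lt_succ_self _
  have H : ∑ k, (ρ k : ℂ) * (p.eval (z k) * (starRingEnd ℂ) (p.eval (z k)))
      = ∑ k, (ρ k : ℂ) * (p.eval (w k) * (starRingEnd ℂ) (p.eval (w k))) := by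
    rw [sum_poly z ρ p hn, sum_poly w ρ p hn]
    refine Finset.sum_congr rfl fun j _ => Finset.sum_congr rfl fun l _ => ?_
    rw [M j l]
  have side : ∀ v : Fin N → ℂ, (∀ k, v k ∈ Finset.image z univ ∪ Finset.image w univ) →
      ∑ k, (ρ k : ℂ) * (p.eval (v k) * (starRingEnd ℂ) (p.eval (v k)))
        = (∑ k, (if v k = a then (ρ k : ℂ) else 0)) * (p.eval a * (starRingEnd ℂ) (p.eval a)) := by
    intro v hv
    rw [Finset.sum_mul]
    refine Finset.sum_congr rfl fun k _ => ?_
    by_cases h : v k = a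
    · rw [h, if_pos rfl]
    · rw [if_neg h, hzero (v k) h (hv k)]
      simp
  have hzmem : ∀ k, z k ∈ Finset.image z univ ∪ Finset.image w univ := fun k =>
    Finset.mem_union_left _ (Finset.mem_image_of_mem z (Finset.mem_univ k))
  have hwmem : ∀ k, w k ∈ Finset.image z univ ∪ Finset.image w univ := fun k =>
    Finset.mem_union_right _ (Finset.mem_image_of_mem w (Finset.mem_univ k))
  have := (side z hzmem).symm.trans (H.trans (side w hwmem))
  exact mul_right_cancel₀ hFa this

private lemma set_char {N : ℕ} (v : Fin N → ℂ) (ρ : Fin N → ℝ) (hv : Function.Injective v)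
    (a : ℂ) (c : ℝ) :
    (∃ k, ρ k ≠ 0 ∧ (a, c) = (v k, ρ k)) ↔
      (c ≠ 0 ∧ ∑ k, (if v k = a then (ρ k : ℂ) else 0) = (c : ℂ)) := by
  constructor
  · rintro ⟨k, hk, heq⟩
    obtain ⟨ha, hc⟩ := Prod.mk.injEq .. ▸ heq
    subst ha; subst hc
    refine ⟨hk, ?_⟩
    have : ∀ k' : Fin N, (if v k' = v k then (ρ k' : ℂ) else 0)
        = if k' = k then (ρ k' : ℂ) else 0 := fun k' => by
      simp only [hv.eq_iff]
    simp only [this]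
    simp
  · rintro ⟨hc, hsum⟩
    have hne : (∑ k, (if v k = a then (ρ k : ℂ) else 0)) ≠ 0 := by
      rw [hsum]; exact_mod_cast hc
    obtain ⟨k, _, hk⟩ := Finset.exists_ne_zero_of_sum_ne_zero hne
    have hva : v k = a := by
      by_contra h; rw [if_neg h] at hk; exact hk rfl
    have hρ : ρ k ≠ 0 := by
      rw [if_pos hva] at hk; exact_mod_cast hk
    refine ⟨k, hρ, ?_⟩
    have hsum' : ∑ k', (if v k' = a then (ρ k' : ℂ) else 0) = (ρ k : ℂ) := by
      subst hva
      have : ∀ k' : Fin N, (if v k' = v k then (ρ k' : ℂ) else 0)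
          = if k' = k then (ρ k' : ℂ) else 0 := fun k' => by
        simp only [hv.eq_iff]
      simp only [this]
      simp
    have : (c : ℂ) = (ρ k : ℂ) := hsum.symm.trans hsum'
    have hcr : c = ρ k := by exact_mod_cast this
    rw [hva, hcr]

private lemma moments_of_sets {N : ℕ} (z w : Fin N → ℂ) (ρ : Fin N → ℝ)
    (hz : Function.Injective z) (hw : Function.Injective w)
    (hS : {p : ℂ × ℝ | ∃ k, ρ k ≠ 0 ∧ p = (z k, ρ k)}
        = {p : ℂ × ℝ | ∃ k, ρ k ≠ 0 ∧ p = (w k, ρ k)}) (j l : ℕ) :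
    ∑ k, z k ^ j * (starRingEnd ℂ) (z k) ^ l * (ρ k : ℂ)
      = ∑ k, w k ^ j * (starRingEnd ℂ) (w k) ^ l * (ρ k : ℂ) := by
  set A : Finset (Fin N) := univ.filter (fun k => ρ k ≠ 0) with hA
  have hF : A.image (fun k => (z k, ρ k)) = A.image (fun k => (w k, ρ k)) := by
    apply Finset.coe_injective
    have h1 : (↑(A.image fun k => (z k, ρ k)) : Set (ℂ × ℝ))
        = {p : ℂ × ℝ | ∃ k, ρ k ≠ 0 ∧ p = (z k, ρ k)} := by
      ext p; simp [hA, eq_comm]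
    have h2 : (↑(A.image fun k => (w k, ρ k)) : Set (ℂ × ℝ))
        = {p : ℂ × ℝ | ∃ k, ρ k ≠ 0 ∧ p = (w k, ρ k)} := by
      ext p; simp [hA, eq_comm]
    rw [h1, h2, hS]
  have key : ∀ v : Fin N → ℂ, Function.Injective v →
      ∑ k, v k ^ j * (starRingEnd ℂ) (v k) ^ l * (ρ k : ℂ)
        = ∑ p ∈ A.image (fun k => (v k, ρ k)),
            p.1 ^ j * (starRingEnd ℂ) p.1 ^ l * (p.2 : ℂ) := by
    intro v hv
    rw [Finset.sum_image (fun x _ y _ h => hv (congrArg Prod.fst h))]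
    refine (Finset.sum_subset (Finset.subset_univ A) fun k _ hk => ?_).symm
    have : ρ k = 0 := by
      by_contra h
      exact hk (Finset.mem_filter.2 ⟨Finset.mem_univ k, h⟩)
    rw [this]; simp
  rw [key z hz, key w hw, hF]

/-- an image (with pairwise distinct pixel locations) is symmetric under
reflection about the line through the origin at angle `θ₀` iff
`Re(μ_{j,l}) sin((l-j)θ₀) + Im(μ_{j,l}) cos((l-j)θ₀) = 0` for all `j, l ≥ 0`. -/
theorem pascal_stmt18 (N : ℕ) (z : Fin N → ℂ) (ρ : Fin N → ℝ)
    (hz : Function.Injective z) (θ₀ : ℝ) :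
    ({p : ℂ × ℝ | ∃ k, ρ k ≠ 0 ∧ p = (z k, ρ k)}
        = {p : ℂ × ℝ | ∃ k, ρ k ≠ 0 ∧
            p = ((starRingEnd ℂ) (z k) * Complex.exp (2 * Complex.I * (θ₀ : ℂ)), ρ k)})
      ↔ ∀ j l : ℕ,
          (∑ k, z k ^ j * (starRingEnd ℂ) (z k) ^ l * (ρ k : ℂ)).re
              * Real.sin (((l : ℝ) - (j : ℝ)) * θ₀)
            + (∑ k, z k ^ j * (starRingEnd ℂ) (z k) ^ l * (ρ k : ℂ)).im
              * Real.cos (((l : ℝ) - (j : ℝ)) * θ₀) = 0 := by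
  set e : ℂ := Complex.exp (2 * Complex.I * (θ₀ : ℂ)) with he_def
  set w : Fin N → ℂ := fun k => (starRingEnd ℂ) (z k) * e with hwdef
  have he : e ≠ 0 := Complex.exp_ne_zero _
  have hw : Function.Injective w := fun x y h =>
    hz (star_injective (mul_right_cancel₀ he h))
  have hconj_e : (starRingEnd ℂ) e = Complex.exp (-(2 * Complex.I * (θ₀ : ℂ))) := by
    rw [he_def, ← Complex.exp_conj]
    congr 1
    simp only [map_mul, Complex.conj_I, Complex.conj_ofReal]
    have : (starRingEnd ℂ) 2 = 2 := map_ofNat _ 2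
    rw [this]; ring
  have hmom : ∀ j l : ℕ,
      ∑ k, w k ^ j * (starRingEnd ℂ) (w k) ^ l * (ρ k : ℂ)
        = (starRingEnd ℂ) (∑ k, z k ^ j * (starRingEnd ℂ) (z k) ^ l * (ρ k : ℂ))
            * Complex.exp (((-2 * (((l : ℝ) - (j : ℝ)) * θ₀)) : ℝ) * Complex.I) := by
    intro j l
    rw [map_sum, Finset.sum_mul]
    refine Finset.sum_congr rfl fun k _ => ?_
    simp only [hwdef, map_mul, map_pow, mul_pow, Complex.conj_conj, Complex.conj_ofReal,
      hconj_e]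
    rw [← Complex.exp_nat_mul, ← Complex.exp_nat_mul]
    have harg : Complex.exp ((j : ℂ) * (2 * Complex.I * (θ₀ : ℂ)))
        * Complex.exp ((l : ℂ) * -(2 * Complex.I * (θ₀ : ℂ)))
        = Complex.exp (((-2 * (((l : ℝ) - (j : ℝ)) * θ₀)) : ℝ) * Complex.I) := by
      rw [← Complex.exp_add]
      congr 1
      push_cast
      ring
    rw [← harg]
    ring
  constructor
  · intro hS j l
    have M := moments_of_sets z w ρ hz hw hS j l
    rw [cond_iff]
    rw [← hmom j l]
    exact M
  · intro hcond
    have M : ∀ j l : ℕ, ∑ k, z k ^ j * (starRingEnd ℂ) (z k) ^ l * (ρ k : ℂ)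
        = ∑ k, w k ^ j * (starRingEnd ℂ) (w k) ^ l * (ρ k : ℂ) := by
      intro j l
      rw [hmom j l]
      exact (cond_iff _ _).1 (hcond j l)
    ext ⟨a, c⟩
    simp only [Set.mem_setOf_eq]
    rw [set_char z ρ hz a c, set_char w ρ hw a c, mass_eq z w ρ M a]
end
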